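/- Let h = h_{1,1} be as defined and let r(n) = h(n) mod 2. Then (r(8n+4))_{n∈ℕ} is periodic with period 4 and values 0,1,1,0 (i.e., r(8n+4) equals 0,1,1,0 according as n ≡ 0,1,2,3 mod 4), and (r(16n+8))_{n∈ℕ} is periodic with period 4 and values 0,0,1,1. Moreover, for all n ∈ ℕ: r(8n+2) = 1 - r(8n), r(8n+6) = r(8n+4), r(32n) = r(16n), and r(32n+16) = 1 - r(16n+8). -/

import Mathlib

theorem stmt10 (h : ℤ → ℕ)
    (hinit : ∀ n : ℤ, n ≤ 1 → h n = 1)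
    (hrec : ∀ n : ℤ, 2 ≤ n → h n = h (n - (h (n - 1) : ℤ)) + h (n - 2))
    (r : ℕ → ℕ) (hr : ∀ n : ℕ, r n = h n % 2) :
    (∀ n : ℕ, r (8 * n + 4) = ![0, 1, 1, 0] (Fin.ofNat 4 n)) ∧
    (∀ n : ℕ, r (16 * n + 8) = ![0, 0, 1, 1] (Fin.ofNat 4 n)) ∧
    (∀ n : ℕ, r (8 * n + 2) = 1 - r (8 * n)) ∧
    (∀ n : ℕ, r (8 * n + 6) = r (8 * n + 4)) ∧
    (∀ n : ℕ, r (32 * n) = r (16 * n)) ∧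
    (∀ n : ℕ, r (32 * n + 16) = 1 - r (16 * n + 8)) := by
  have key : ∀ k : ℕ, h (2*(k:ℤ)+1) = k+1 ∧ h (2*(k:ℤ)+2) = h ((k:ℤ)+1) + h (2*(k:ℤ))
      ∧ 2*k+2 ≤ h (2*(k:ℤ)+2) := by
    intro k
    induction k using Nat.strong_induction_on with
    | _ k IH =>
    have hA : h (2*(k:ℤ)+1) = k+1 := by
      match k with
      | 0 => simpa using hinit 1 (by norm_num)
      | (j+1) =>
        have hCj := (IH j (by omega)).2.2
        have hAj := (IH j (by omega)).1
        have hrecn := hrec (2*((j:ℤ)+1)+1) (by omega)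
        have e1 : (2*((j:ℤ)+1)+1-1) = 2*(j:ℤ)+2 := by ring
        have e2 : (2*((j:ℤ)+1)+1-2) = 2*(j:ℤ)+1 := by ring
        rw [e1, e2, hAj] at hrecn
        have hub : (2*((j:ℤ)+1)+1 - (h (2*(j:ℤ)+2) : ℤ)) ≤ 1 := by
          omega
        rw [hinit _ hub] at hrecn
        push_cast
        omega
    have hB : h (2*(k:ℤ)+2) = h ((k:ℤ)+1) + h (2*(k:ℤ)) := by
      have hrecn := hrec (2*(k:ℤ)+2) (by omega)
      have e1 : (2*(k:ℤ)+2-1) = 2*(k:ℤ)+1 := by ring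
      have e2 : (2*(k:ℤ)+2-2) = 2*(k:ℤ) := by ring
      rw [e1, e2, hA] at hrecn
      have e3 : (2*(k:ℤ)+2 - ((k:ℕ)+1 : ℕ)) = (k:ℤ)+1 := by push_cast; ring
      rw [e3] at hrecn
      exact hrecn
    refine ⟨hA, hB, ?_⟩
    rw [hB]
    match k with
    | 0 =>
      have h1 : h (((0:ℕ):ℤ)+1) = 1 := hinit _ (by norm_num)
      have h0 : h (2*((0:ℕ):ℤ)) = 1 := hinit _ (by norm_num)
      omega
    | (j+1) =>
      have hCj := (IH j (by omega)).2.2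
      have h2 : h (2*((j:ℤ)+1)) = h (2*(j:ℤ)+2) := by ring_nf
      have hk2 : 2 ≤ h (((j:ℤ)+1)+1) := by
        rcases Nat.even_or_odd j with ⟨m, hm⟩ | ⟨m, hm⟩
        · have hCm := (IH m (by omega)).2.2
          have : ((j:ℤ)+1)+1 = 2*(m:ℤ)+2 := by omega
          rw [this]; omega
        · have hAm := (IH (m+1) (by omega)).1
          have : ((j:ℤ)+1)+1 = 2*((m+1:ℕ):ℤ)+1 := by push_cast; omega
          rw [this, hAm]; omega
      push_cast
      push_cast at h2 hk2 hCj
      omega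
  -- Nat-cast versions
  have hA' : ∀ m : ℕ, h ((2*m+1 : ℕ) : ℤ) = m + 1 := by
    intro m
    have := (key m).1
    push_cast
    push_cast at this
    convert this using 2
  have hB' : ∀ m : ℕ, h ((2*m+2 : ℕ) : ℤ) = h ((m+1 : ℕ) : ℤ) + h ((2*m : ℕ) : ℤ) := by
    intro m
    have := (key m).2.1
    push_cast
    convert this using 2
  -- value at 4
  have hv4 : h ((4:ℕ):ℤ) % 2 = 0 := by
    have b1 := hB' 1
    have b0 := hB' 0
    rw [show (2*1+2 : ℕ) = 4 from rfl, show (1+1 : ℕ) = 2 from rfl,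
        show (2*1 : ℕ) = 2 from rfl] at b1
    rw [show (2*0+2 : ℕ) = 2 from rfl, show (0+1 : ℕ) = 1 from rfl,
        show (2*0 : ℕ) = 0 from rfl] at b0
    have h1 : h ((1:ℕ):ℤ) = 1 := hinit _ (by norm_num)
    have h0 : h ((0:ℕ):ℤ) = 1 := hinit _ (by norm_num)
    omega
  -- the parity step for P4
  have hstep : ∀ n : ℕ, (h ((8*n+12 : ℕ):ℤ) + h ((8*n+4 : ℕ):ℤ) + n + 1) % 2 = 0 := by
    intro n
    have E1 := hB' (4*n+5)
    rw [show 2*(4*n+5)+2 = 8*n+12 from by ring, show (4*n+5)+1 = 4*n+6 from by ring,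
        show 2*(4*n+5) = 8*n+10 from by ring] at E1
    have E2 := hB' (4*n+4)
    rw [show 2*(4*n+4)+2 = 8*n+10 from by ring, show (4*n+4)+1 = 4*n+5 from by ring,
        show 2*(4*n+4) = 8*n+8 from by ring] at E2
    have E3 := hA' (2*n+2)
    rw [show 2*(2*n+2)+1 = 4*n+5 from by ring] at E3
    have E4 := hB' (4*n+3)
    rw [show 2*(4*n+3)+2 = 8*n+8 from by ring, show (4*n+3)+1 = 4*n+4 from by ring,
        show 2*(4*n+3) = 8*n+6 from by ring] at E4
    have E5 := hB' (4*n+2)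
    rw [show 2*(4*n+2)+2 = 8*n+6 from by ring, show (4*n+2)+1 = 4*n+3 from by ring,
        show 2*(4*n+2) = 8*n+4 from by ring] at E5
    have E6 := hA' (2*n+1)
    rw [show 2*(2*n+1)+1 = 4*n+3 from by ring] at E6
    have E7 := hB' (2*n+2)
    rw [show 2*(2*n+2)+2 = 4*n+6 from by ring, show (2*n+2)+1 = 2*n+3 from by ring,
        show 2*(2*n+2) = 4*n+4 from by ring] at E7
    have E8 := hA' (n+1)
    rw [show 2*(n+1)+1 = 2*n+3 from by ring] at E8
    omega
  -- the main pattern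
  have hP4 : ∀ n : ℕ, h ((8*n+4 : ℕ):ℤ) % 2 = ((n+1) % 4) / 2 := by
    intro n
    induction n with
    | zero => simpa using hv4
    | succ m ih =>
      have hs := hstep m
      rw [show 8*(m+1)+4 = 8*m+12 from by ring]
      rcases (show m % 4 = 0 ∨ m % 4 = 1 ∨ m % 4 = 2 ∨ m % 4 = 3 from by omega)
        with hm | hm | hm | hm <;> omega
  -- Fin evaluation lemmas
  have fin1 : ∀ n : ℕ, (![0,1,1,0] : Fin 4 → ℕ) (Fin.ofNat 4 n) = ((n+1) % 4) / 2 := by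
    intro n
    have hc : Fin.ofNat 4 n = Fin.ofNat 4 (n % 4) := by
      ext; simp [Fin.val_ofNat]
    rcases (show n % 4 = 0 ∨ n % 4 = 1 ∨ n % 4 = 2 ∨ n % 4 = 3 from by omega)
      with hn | hn | hn | hn
    · rw [hc, hn, show ((n+1) % 4) / 2 = 0 from by omega]; rfl
    · rw [hc, hn, show ((n+1) % 4) / 2 = 1 from by omega]; rfl
    · rw [hc, hn, show ((n+1) % 4) / 2 = 1 from by omega]; rfl
    · rw [hc, hn, show ((n+1) % 4) / 2 = 0 from by omega]; rfl
  have fin2 : ∀ n : ℕ, (![0,0,1,1] : Fin 4 → ℕ) (Fin.ofNat 4 n) = (n % 4) / 2 := by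
    intro n
    have hc : Fin.ofNat 4 n = Fin.ofNat 4 (n % 4) := by
      ext; simp [Fin.val_ofNat]
    rcases (show n % 4 = 0 ∨ n % 4 = 1 ∨ n % 4 = 2 ∨ n % 4 = 3 from by omega)
      with hn | hn | hn | hn
    · rw [hc, hn]; decide
    · rw [hc, hn]; decide
    · rw [hc, hn]; decide
    · rw [hc, hn]; decide
  refine ⟨?_, ?_, ?_, ?_, ?_, ?_⟩
  · intro n
    rw [hr, fin1 n, hP4 n]
  · intro n
    rw [hr, fin2 n]
    have F1 := hB' (8*n+3)
    rw [show 2*(8*n+3)+2 = 16*n+8 from by ring, show (8*n+3)+1 = 8*n+4 from by ring,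
        show 2*(8*n+3) = 16*n+6 from by ring] at F1
    have F2 := hB' (8*n+2)
    rw [show 2*(8*n+2)+2 = 16*n+6 from by ring, show (8*n+2)+1 = 8*n+3 from by ring,
        show 2*(8*n+2) = 16*n+4 from by ring] at F2
    have F3 := hA' (4*n+1)
    rw [show 2*(4*n+1)+1 = 8*n+3 from by ring] at F3
    have F4 := hP4 (2*n)
    rw [show 8*(2*n)+4 = 16*n+4 from by ring] at F4
    have F5 := hP4 n
    rcases (show n % 4 = 0 ∨ n % 4 = 1 ∨ n % 4 = 2 ∨ n % 4 = 3 from by omega)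
      with hn | hn | hn | hn <;> omega
  · intro n
    rw [hr, hr]
    have G1 := hB' (4*n)
    rw [show 2*(4*n)+2 = 8*n+2 from by ring, show 2*(4*n) = 8*n from by ring] at G1
    have G2 := hA' (2*n)
    rw [show 2*(2*n)+1 = (4*n)+1 from by ring] at G2
    omega
  · intro n
    rw [hr, hr]
    have G1 := hB' (4*n+2)
    rw [show 2*(4*n+2)+2 = 8*n+6 from by ring, show (4*n+2)+1 = 4*n+3 from by ring,
        show 2*(4*n+2) = 8*n+4 from by ring] at G1
    have G2 := hA' (2*n+1)
    rw [show 2*(2*n+1)+1 = 4*n+3 from by ring] at G2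
    omega
  · intro n
    cases n with
    | zero => norm_num
    | succ m =>
      rw [show 32*(m+1) = 32*m+32 from by ring, show 16*(m+1) = 16*m+16 from by ring,
          hr, hr]
      have K1 := hB' (16*m+15)
      rw [show 2*(16*m+15)+2 = 32*m+32 from by ring, show (16*m+15)+1 = 16*m+16 from by ring,
          show 2*(16*m+15) = 32*m+30 from by ring] at K1
      have K2 := hB' (16*m+14)
      rw [show 2*(16*m+14)+2 = 32*m+30 from by ring, show (16*m+14)+1 = 16*m+15 from by ring,
          show 2*(16*m+14) = 32*m+28 from by ring] at K2
      have K3 := hA' (8*m+7)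
      rw [show 2*(8*m+7)+1 = 16*m+15 from by ring] at K3
      have K4 := hP4 (4*m+3)
      rw [show 8*(4*m+3)+4 = 32*m+28 from by ring,
          show ((4*m+3)+1) % 4 / 2 = 0 from by omega] at K4
      omega
  · intro n
    rw [hr, hr]
    have L1 := hB' (16*n+7)
    rw [show 2*(16*n+7)+2 = 32*n+16 from by ring, show (16*n+7)+1 = 16*n+8 from by ring,
        show 2*(16*n+7) = 32*n+14 from by ring] at L1
    have L2 := hB' (16*n+6)
    rw [show 2*(16*n+6)+2 = 32*n+14 from by ring, show (16*n+6)+1 = 16*n+7 from by ring,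
        show 2*(16*n+6) = 32*n+12 from by ring] at L2
    have L3 := hA' (8*n+3)
    rw [show 2*(8*n+3)+1 = 16*n+7 from by ring] at L3
    have L4 := hP4 (4*n+1)
    rw [show 8*(4*n+1)+4 = 32*n+12 from by ring,
        show ((4*n+1)+1) % 4 / 2 = 1 from by omega] at L4
    omega
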